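/- Suppose the operators D, G, L, L_p satisfy the commuting relations G L_p = L G and L_p D = D L, with A = θρ₀ I - μ₀ L invertible and L_p = D G invertible. Then the Schur complement S = -D A^{-1} G satisfies S = -(θρ₀ I - μ₀ L_p)^{-1} L_p, provided θρ₀ I - μ₀ L_p is invertible; equivalently S^{-1} = -θρ₀ L_p^{-1} + μ₀ I. -/
import Mathlib


open Matrix

theorem stmt_7 {n m : ℕ}
    (D : Matrix (Fin m) (Fin n) ℝ) (G : Matrix (Fin n) (Fin m) ℝ)
    (L : Matrix (Fin n) (Fin n) ℝ) (θ ρ₀ μ₀ : ℝ)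
    (Lp : Matrix (Fin m) (Fin m) ℝ) (hLp : Lp = D * G)
    (A : Matrix (Fin n) (Fin n) ℝ)
    (hAdef : A = (θ * ρ₀) • (1 : Matrix (Fin n) (Fin n) ℝ) - μ₀ • L)
    (hcomm1 : G * Lp = L * G) (hcomm2 : Lp * D = D * L)
    (hA : IsUnit A.det) (hLpU : IsUnit Lp.det)
    (hB : IsUnit ((θ * ρ₀) • (1 : Matrix (Fin m) (Fin m) ℝ) - μ₀ • Lp).det)
    (S : Matrix (Fin m) (Fin m) ℝ) (hSdef : S = -(D * A⁻¹ * G)) :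
    S = -(((θ * ρ₀) • (1 : Matrix (Fin m) (Fin m) ℝ) - μ₀ • Lp)⁻¹ * Lp) ∧
      S⁻¹ = -((θ * ρ₀) • Lp⁻¹) + μ₀ • (1 : Matrix (Fin m) (Fin m) ℝ) := by
  set B := (θ * ρ₀) • (1 : Matrix (Fin m) (Fin m) ℝ) - μ₀ • Lp with hBdef
  have hBD : B * D = D * A := by
    rw [hBdef, hAdef]
    simp only [Matrix.sub_mul, Matrix.mul_sub, Matrix.smul_mul, Matrix.mul_smul,
      Matrix.one_mul, Matrix.mul_one, hcomm2]
  have hDA : D * A⁻¹ = B⁻¹ * D := by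
    calc D * A⁻¹ = B⁻¹ * (B * D) * A⁻¹ := by
          rw [← Matrix.mul_assoc, Matrix.nonsing_inv_mul B hB, Matrix.one_mul]
      _ = B⁻¹ * (D * A) * A⁻¹ := by rw [hBD]
      _ = B⁻¹ * D := by
          rw [Matrix.mul_assoc, Matrix.mul_assoc, Matrix.mul_nonsing_inv A hA,
            Matrix.mul_one]
  have h1 : S = -(B⁻¹ * Lp) := by
    rw [hSdef, hDA, hLp, Matrix.mul_assoc]
  refine ⟨h1, ?_⟩
  have h2 : S⁻¹ = -(Lp⁻¹ * B) := by
    rw [h1]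
    apply Matrix.inv_eq_right_inv
    rw [Matrix.neg_mul, Matrix.mul_neg, neg_neg, Matrix.mul_assoc,
      ← Matrix.mul_assoc Lp, Matrix.mul_nonsing_inv Lp hLpU, Matrix.one_mul,
      Matrix.nonsing_inv_mul B hB]
  rw [h2, hBdef]
  rw [Matrix.mul_sub, Matrix.mul_smul, Matrix.mul_one, Matrix.mul_smul,
    Matrix.nonsing_inv_mul Lp hLpU]
  rw [neg_sub]
  abel
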